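/- arXiv:2502.08897 — 2 statements merged into one kernel-verified Lean document; each statement's English description precedes it below -/
import Mathlib

section
/- For a real symmetric matrix H, its Green's function G(z) = (H-z)⁻¹ and one removed index k, the identity G^{(k)}_{ij} = G_{ij} - G_{ik} G_{kj} / G_{kk} holds for all i,j ≠ k, where G^{(k)} is the Green's function of the matrix obtained by deleting row and column k. In particular G_{kk} ≠ 0. -/
open Matrix Finset


lemma quad_im {n : Type*} [Fintype n] [DecidableEq n] (B : Matrix n n ℝ) (hB : B.IsSymm)
    (z : ℂ) (v w : n → ℂ)
    (hvw : (B.map (fun x => (x : ℂ)) - z • (1 : Matrix n n ℂ)).mulVec v = w) :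
    (∑ i, (starRingEnd ℂ) (v i) * w i).im
      = -z.im * ∑ i, Complex.normSq (v i) := by
  have hw : ∀ i, w i = (∑ j, (B i j : ℂ) * v j) - z * v i := by
    intro i
    rw [← hvw]
    simp [Matrix.mulVec, dotProduct, Matrix.sub_apply, Matrix.one_apply,
      Finset.sum_sub_distrib, sub_mul, ite_mul, mul_ite]
  set T := ∑ i, ∑ j, (starRingEnd ℂ) (v i) * (B i j : ℂ) * v j with hTdef
  have hT : (starRingEnd ℂ) T = T := by
    simp only [hTdef, map_sum, _root_.map_mul, Complex.conj_conj, Complex.conj_ofReal]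
    rw [Finset.sum_comm]
    refine Finset.sum_congr rfl fun a _ => Finset.sum_congr rfl fun b _ => ?_
    rw [hB.apply]
    ring
  have hTim : T.im = 0 := Complex.conj_eq_iff_im.mp hT
  have hsplit : ∑ i, (starRingEnd ℂ) (v i) * w i
      = T - z * ((∑ i, Complex.normSq (v i) : ℝ) : ℂ) := by
    simp only [hw, mul_sub]
    rw [Finset.sum_sub_distrib]
    congr 1
    · rw [hTdef]
      refine Finset.sum_congr rfl fun i _ => ?_
      rw [Finset.mul_sum]
      exact Finset.sum_congr rfl fun j _ => by ring
    · push_cast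
      rw [Finset.mul_sum]
      refine Finset.sum_congr rfl fun i _ => ?_
      rw [Complex.normSq_eq_conj_mul_self]
      ring
  rw [hsplit]
  simp [Complex.sub_im, Complex.mul_im, hTim]

lemma det_unit {n : Type*} [Fintype n] [DecidableEq n] (B : Matrix n n ℝ) (hB : B.IsSymm)
    (z : ℂ) (hz : z.im ≠ 0) :
    IsUnit (B.map (fun x => (x : ℂ)) - z • (1 : Matrix n n ℂ)).det := by
  rw [isUnit_iff_ne_zero]
  intro hdet
  obtain ⟨v, hv0, hv⟩ := (Matrix.exists_mulVec_eq_zero_iff).mpr hdet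
  have h := quad_im B hB z v 0 hv
  simp only [Pi.zero_apply, mul_zero, Finset.sum_const_zero, Complex.zero_im] at h
  have hS : ∑ i, Complex.normSq (v i) = 0 := by
    rcases mul_eq_zero.mp h.symm with h1 | h1
    · exact absurd (neg_eq_zero.mp h1) hz
    · exact h1
  apply hv0
  funext i
  have := (Finset.sum_eq_zero_iff_of_nonneg (fun i _ => Complex.normSq_nonneg (v i))).mp hS i (Finset.mem_univ i)
  simpa using Complex.normSq_eq_zero.mp this

/-- Removing one index from the Green's function: for real symmetric `H`,
`z` in the upper half-plane, `G = (H-z)⁻¹` and `G^{(k)} = (H^{(k)}-z)⁻¹`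
(the Green's function of the matrix obtained by deleting row and column `k`),
one has `G_{kk} ≠ 0` and `G^{(k)}_{ij} = G_{ij} - G_{ik} G_{kj} / G_{kk}`
for all `i, j ≠ k`. -/
theorem green_remove_one_index {N : ℕ} (H : Matrix (Fin N) (Fin N) ℝ) (hH : H.IsSymm)
    (z : ℂ) (hz : 0 < z.im) (k : Fin N) :
    let G := (H.map (fun x => (x : ℂ)) - z • (1 : Matrix (Fin N) (Fin N) ℂ))⁻¹
    let Gk := ((H.submatrix (fun i : {i : Fin N // i ≠ k} => (i : Fin N))
        (fun j : {j : Fin N // j ≠ k} => (j : Fin N))).map (fun x => (x : ℂ))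
        - z • (1 : Matrix {i : Fin N // i ≠ k} {i : Fin N // i ≠ k} ℂ))⁻¹
    G k k ≠ 0 ∧
      ∀ i j : {i : Fin N // i ≠ k},
        Gk i j = G (i : Fin N) (j : Fin N)
          - G (i : Fin N) k * G k (j : Fin N) / G k k := by
  intro G Gk
  set A : Matrix (Fin N) (Fin N) ℂ :=
    H.map (fun x => (x : ℂ)) - z • (1 : Matrix (Fin N) (Fin N) ℂ) with hAdef
  have hAunit : IsUnit A.det := det_unit H hH z (ne_of_gt hz)
  have hAG : A * G = 1 := Matrix.mul_nonsing_inv A hAunit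
  -- column of G
  have hu : A.mulVec (fun i => G i k) = Pi.single k 1 := by
    funext i
    have h1 := congrFun (congrFun hAG i) k
    simpa [Matrix.mulVec, dotProduct, Matrix.mul_apply, Matrix.one_apply,
      Pi.single_apply] using h1
  have him := quad_im H hH z (fun i => G i k) (Pi.single k 1) hu
  have hsum : ∑ i, (starRingEnd ℂ) (G i k) * (Pi.single k 1 : Fin N → ℂ) i
      = (starRingEnd ℂ) (G k k) := by
    simp [Pi.single_apply, mul_ite]
  have hS : ∑ i, Complex.normSq (G i k) ≠ 0 := by
    intro h0
    have hzero : ∀ i, G i k = 0 := by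
      intro i
      have := (Finset.sum_eq_zero_iff_of_nonneg
        (fun i _ => Complex.normSq_nonneg (G i k))).mp h0 i (Finset.mem_univ i)
      exact Complex.normSq_eq_zero.mp this
    have h1 := congrFun hu k
    simp [Matrix.mulVec, dotProduct, hzero, Pi.single_apply] at h1
  have hGkk : G k k ≠ 0 := by
    intro h
    rw [hsum, h] at him
    simp only [map_zero, Complex.zero_im] at him
    exact (mul_ne_zero (neg_ne_zero.mpr (ne_of_gt hz)) hS) him.symm
  refine ⟨hGkk, ?_⟩
  set Ak : Matrix {i : Fin N // i ≠ k} {i : Fin N // i ≠ k} ℂ :=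
    (H.submatrix (fun i : {i : Fin N // i ≠ k} => (i : Fin N))
        (fun j : {j : Fin N // j ≠ k} => (j : Fin N))).map (fun x => (x : ℂ))
        - z • (1 : Matrix {i : Fin N // i ≠ k} {i : Fin N // i ≠ k} ℂ) with hAkdef
  set M : Matrix {i : Fin N // i ≠ k} {i : Fin N // i ≠ k} ℂ :=
    Matrix.of (fun i j => G (i : Fin N) (j : Fin N)
      - G (i : Fin N) k * G k (j : Fin N) / G k k) with hMdef
  have hAk : ∀ i l : {l : Fin N // l ≠ k}, Ak i l = A (i : Fin N) (l : Fin N) := by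
    intro i l
    by_cases h : i = l
    · subst h; simp [hAkdef, hAdef, Matrix.sub_apply, Matrix.smul_apply, Matrix.one_apply]
    · have h' : (i : Fin N) ≠ (l : Fin N) := fun hc => h (Subtype.ext hc)
      simp [hAkdef, hAdef, Matrix.sub_apply, Matrix.smul_apply, Matrix.one_apply, h, h']
  have hinv : Ak * M = 1 := by
    ext i j
    rw [Matrix.mul_apply]
    have hstep1 : ∑ l : {l : Fin N // l ≠ k}, Ak i l * M l j
        = ∑ l : {l : Fin N // l ≠ k},
            (fun l : Fin N => A (i : Fin N) l *
              (G l (j : Fin N) - G l k * G k (j : Fin N) / G k k)) (l : Fin N) := by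
      refine Finset.sum_congr rfl fun l _ => ?_
      rw [hAk]
      rfl
    have hsub : ∑ l ∈ ({k}ᶜ : Finset (Fin N)),
        A (i : Fin N) l * (G l (j : Fin N) - G l k * G k (j : Fin N) / G k k)
        = ∑ l : {l : Fin N // l ≠ k},
            (fun l : Fin N => A (i : Fin N) l *
              (G l (j : Fin N) - G l k * G k (j : Fin N) / G k k)) (l : Fin N) :=
      Finset.sum_subtype ({k}ᶜ : Finset (Fin N)) (fun x => by simp) _
    rw [hstep1, ← hsub]
    have hcompl : ∀ f : Fin N → ℂ, ∑ l ∈ ({k}ᶜ : Finset (Fin N)), f l = (∑ l, f l) - f k := by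
      intro f
      rw [← Finset.sum_compl_add_sum ({k} : Finset (Fin N)) f, Finset.sum_singleton]
      ring
    rw [hcompl]
    have hfk : A (i : Fin N) k * (G k (j : Fin N) - G k k * G k (j : Fin N) / G k k) = 0 := by
      rw [mul_div_assoc, mul_comm (G k k), div_mul_cancel₀ _ hGkk]
      ring
    rw [hfk, sub_zero]
    have hsplit : ∑ l, A (i : Fin N) l *
        (G l (j : Fin N) - G l k * G k (j : Fin N) / G k k)
        = (A * G) (i : Fin N) (j : Fin N)
          - (A * G) (i : Fin N) k * (G k (j : Fin N) / G k k) := by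
      rw [Matrix.mul_apply, Matrix.mul_apply, Finset.sum_mul, ← Finset.sum_sub_distrib]
      refine Finset.sum_congr rfl fun l _ => ?_
      ring
    rw [hsplit, hAG]
    have hik : (1 : Matrix (Fin N) (Fin N) ℂ) (i : Fin N) k = 0 := by
      simp [Matrix.one_apply, i.2]
    rw [hik, zero_mul, sub_zero]
    by_cases h : i = j
    · subst h; simp [Matrix.one_apply]
    · have h' : (i : Fin N) ≠ (j : Fin N) := fun hc => h (Subtype.ext hc)
      simp [Matrix.one_apply, h, h']
  intro i j
  have hGkM : Gk = M := Matrix.inv_eq_right_inv hinv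
  rw [hGkM]
  rfl
end

section
/- For the Airy₁-type tail bound transfer: suppose a nonincreasing sequence of reals x_1 ≥ x_2 ≥ … satisfies |{i : x_i ≥ -t}| ≤ C(1+t)^{3/2} for all t ≥ 0. Then for any w = E + iη with η > 0 and any j ≥ C(1+|w|)^{3/2} large enough, one has x_s - E ≤ 1 + |w| - (s/C)^{2/3} ≤ -(1/2)(s/C)^{2/3} for s > j, hence |x_s - w|² ≥ (1/4)(s/C)^{4/3}, and consequently Σ_{s>j} η/|x_s - w|² ≤ C' η / j^{1/6} for a constant C' depending only on C. -/
open Filter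

set_option maxHeartbeats 2000000

/-- Airy₁-type tail bound transfer: let `x_1 ≥ x_2 ≥ …` be a nonincreasing
sequence of reals with the counting bound `|{i : x_i ≥ -t}| ≤ C(1+t)^{3/2}` for
all `t ≥ 0` (with `C ≥ 1`). Then there are constants `C' > 0` and `C'' ≥ 1`
(depending only on `C`) such that for every `w = E + iη` in the upper
half-plane and every `j ≥ C''·C(1+|w|)^{3/2}` (the "large enough" threshold),
one has `x_s - E ≤ -(1/2)(s/C)^{2/3}` and `|x_s - w|² ≥ (1/4)(s/C)^{4/3}` for
all `s > j`, and consequently `Σ_{s>j} η/|x_s - w|² ≤ C' η / j^{1/6}`. -/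
theorem airy_tail_bound_transfer (C : ℝ) (hC : 1 ≤ C) :
    ∃ C' > (0 : ℝ), ∃ C'' ≥ (1 : ℝ),
      ∀ x : ℕ → ℝ, (∀ s t : ℕ, s ≤ t → x t ≤ x s) →
      (∀ t : ℝ, 0 ≤ t → {i : ℕ | -t ≤ x i}.Finite ∧
        ({i : ℕ | -t ≤ x i}.ncard : ℝ) ≤ C * (1 + t) ^ ((3 : ℝ) / 2)) →
      ∀ w : ℂ, 0 < w.im → ∀ j : ℕ,
        C'' * C * (1 + ‖w‖) ^ ((3 : ℝ) / 2) ≤ (j : ℝ) →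
        (∀ s : ℕ, j < s →
          x s - w.re ≤ -(1 / 2) * ((s : ℝ) / C) ^ ((2 : ℝ) / 3) ∧
          (1 / 4) * ((s : ℝ) / C) ^ ((4 : ℝ) / 3)
            ≤ ‖(x s : ℂ) - w‖ ^ 2) ∧
        (∑' s : {s : ℕ // j < s}, w.im / ‖(x (s : ℕ) : ℂ) - w‖ ^ 2)
          ≤ C' * w.im / (j : ℝ) ^ ((1 : ℝ) / 6) := by
  have hC0 : (0 : ℝ) < C := lt_of_lt_of_le one_pos hC
  -- the p-series constant
  have hSsum : Summable (fun n : ℕ => ((n : ℝ) ^ ((7 : ℝ) / 6))⁻¹) :=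
    Real.summable_nat_rpow_inv.mpr (by norm_num)
  set S : ℝ := ∑' n : ℕ, ((n : ℝ) ^ ((7 : ℝ) / 6))⁻¹ with hS
  have hSnonneg : ∀ n : ℕ, 0 ≤ ((n : ℝ) ^ ((7 : ℝ) / 6))⁻¹ := fun n =>
    inv_nonneg.mpr (Real.rpow_nonneg (Nat.cast_nonneg n) _)
  have hS1 : (1 : ℝ) ≤ S := by
    have := Summable.le_tsum hSsum 1 (fun m _ => hSnonneg m)
    simpa using this
  have hCpow : (0 : ℝ) < C ^ ((4 : ℝ) / 3) := Real.rpow_pos_of_pos hC0 _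
  refine ⟨4 * C ^ ((4 : ℝ) / 3) * S, by positivity, 3, by norm_num, ?_⟩
  intro x hmono hcount w hw j hj
  have habs : (0 : ℝ) ≤ ‖w‖ := norm_nonneg w
  have h1w : (1 : ℝ) ≤ 1 + ‖w‖ := by linarith
  have h1w' : (1 : ℝ) ≤ (1 + ‖w‖) ^ ((3 : ℝ) / 2) :=
    Real.one_le_rpow h1w (by norm_num)
  have hj3 : (3 : ℝ) * C ≤ (j : ℝ) := by nlinarith
  have hj1 : (1 : ℝ) ≤ (j : ℝ) := by linarith
  -- key pointwise bounds
  have key : ∀ s : ℕ, j < s →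
      x s - w.re ≤ -(1 / 2) * ((s : ℝ) / C) ^ ((2 : ℝ) / 3) ∧
      (1 / 4) * ((s : ℝ) / C) ^ ((4 : ℝ) / 3)
        ≤ ‖(x s : ℂ) - w‖ ^ 2 := by
    intro s hs
    have hsj : (j : ℝ) < (s : ℝ) := by exact_mod_cast hs
    have hsC : (3 : ℝ) * C * (1 + ‖w‖) ^ ((3 : ℝ) / 2) ≤ (s : ℝ) := by
      calc (3:ℝ) * C * (1 + ‖w‖) ^ ((3 : ℝ) / 2) ≤ (j : ℝ) := hj
        _ ≤ (s : ℝ) := le_of_lt hsj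
    have hs1 : (1 : ℝ) ≤ (s : ℝ) / C := by
      rw [le_div_iff₀ hC0]; nlinarith
    have hsCpos : (0 : ℝ) < (s : ℝ) / C := lt_of_lt_of_le one_pos hs1
    set t : ℝ := ((s : ℝ) / C) ^ ((2 : ℝ) / 3) - 1 with ht
    have ht0 : 0 ≤ t := by
      have h' : (1 : ℝ) ≤ ((s : ℝ) / C) ^ ((2 : ℝ) / 3) :=
        Real.one_le_rpow hs1 (by norm_num)
      rw [ht]; linarith
    have h1t : 1 + t = ((s : ℝ) / C) ^ ((2 : ℝ) / 3) := by ring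
    have hpow : C * (1 + t) ^ ((3 : ℝ) / 2) = (s : ℝ) := by
      rw [h1t, ← Real.rpow_mul (le_of_lt hsCpos)]
      norm_num
      field_simp
    -- x s < -t
    have hxs : x s ≤ -t := by
      by_contra hcon
      push_neg at hcon
      have hxs' : -t ≤ x s := le_of_lt hcon
      obtain ⟨hfin, hcard⟩ := hcount t ht0
      have hsub : (Finset.range (s + 1) : Set ℕ) ⊆ {i : ℕ | -t ≤ x i} := by
        intro i hi
        simp only [Finset.coe_range, Set.mem_Iio] at hi
        exact Set.mem_setOf.mpr (le_trans hxs' (hmono i s (Nat.lt_succ_iff.mp hi)))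
      have hle : (s + 1 : ℕ) ≤ {i : ℕ | -t ≤ x i}.ncard := by
        have h' := Set.ncard_le_ncard hsub hfin
        rwa [Set.ncard_coe_finset, Finset.card_range] at h'
      have : ((s : ℝ) + 1) ≤ (s : ℝ) := by
        calc ((s : ℝ) + 1) ≤ ({i : ℕ | -t ≤ x i}.ncard : ℝ) := by exact_mod_cast hle
          _ ≤ C * (1 + t) ^ ((3 : ℝ) / 2) := hcard
          _ = (s : ℝ) := hpow
      linarith
    -- the threshold bound: 2(1+|w|) ≤ (s/C)^{2/3}
    have hthresh : 2 * (1 + ‖w‖) ≤ ((s : ℝ) / C) ^ ((2 : ℝ) / 3) := by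
      have h3 : (3 : ℝ) * (1 + ‖w‖) ^ ((3 : ℝ) / 2) ≤ (s : ℝ) / C := by
        rw [le_div_iff₀ hC0]; nlinarith
      have hmono23 : ((3 : ℝ) * (1 + ‖w‖) ^ ((3 : ℝ) / 2)) ^ ((2 : ℝ) / 3)
          ≤ ((s : ℝ) / C) ^ ((2 : ℝ) / 3) :=
        Real.rpow_le_rpow (by positivity) h3 (by norm_num)
      have heq : ((3 : ℝ) * (1 + ‖w‖) ^ ((3 : ℝ) / 2)) ^ ((2 : ℝ) / 3)
          = (3 : ℝ) ^ ((2 : ℝ) / 3) * (1 + ‖w‖) := by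
        rw [Real.mul_rpow (by norm_num) (by positivity),
          ← Real.rpow_mul (by positivity)]
        norm_num
      have h32 : (2 : ℝ) ≤ (3 : ℝ) ^ ((2 : ℝ) / 3) := by
        have ha : (0 : ℝ) ≤ (3 : ℝ) ^ ((2 : ℝ) / 3) := Real.rpow_nonneg (by norm_num) _
        have hcube : ((3 : ℝ) ^ ((2 : ℝ) / 3)) ^ (3 : ℕ) = 9 := by
          rw [← Real.rpow_natCast ((3:ℝ) ^ ((2:ℝ)/3)) 3, ← Real.rpow_mul (by norm_num)]
          norm_num
        generalize hgen : (3 : ℝ) ^ ((2 : ℝ) / 3) = a at ha hcube ⊢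
        have hcube' : a * a * a = 9 := by rw [← hcube]; ring
        nlinarith [sq_nonneg (a - 2), sq_nonneg (a + 2), hcube', ha]
      calc 2 * (1 + ‖w‖) ≤ (3 : ℝ) ^ ((2 : ℝ) / 3) * (1 + ‖w‖) :=
            mul_le_mul_of_nonneg_right h32 (by linarith)
        _ = ((3 : ℝ) * (1 + ‖w‖) ^ ((3 : ℝ) / 2)) ^ ((2 : ℝ) / 3) := heq.symm
        _ ≤ ((s : ℝ) / C) ^ ((2 : ℝ) / 3) := hmono23
    have hre : |w.re| ≤ ‖w‖ := Complex.abs_re_le_norm w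
    have hfirst : x s - w.re ≤ -(1 / 2) * ((s : ℝ) / C) ^ ((2 : ℝ) / 3) := by
      have : x s - w.re ≤ -t + |w.re| := by
        have := abs_le.mp (le_refl |w.re|)
        have h2 : -|w.re| ≤ w.re := neg_abs_le w.re
        linarith
      rw [ht] at this
      linarith [hthresh, hre]
    refine ⟨hfirst, ?_⟩
    have hsq : ‖(x s : ℂ) - w‖ ^ 2 = (x s - w.re) ^ 2 + w.im ^ 2 := by
      rw [← Complex.normSq_eq_norm_sq, Complex.normSq_apply]
      simp [Complex.sub_re, Complex.sub_im]
      ring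
    have hpos23 : (0 : ℝ) ≤ ((s : ℝ) / C) ^ ((2 : ℝ) / 3) := Real.rpow_nonneg (le_of_lt hsCpos) _
    have hsqb : ((1 / 2) * ((s : ℝ) / C) ^ ((2 : ℝ) / 3)) ^ 2 ≤ (x s - w.re) ^ 2 := by
      have h1 : x s - w.re ≤ -((1 / 2) * ((s : ℝ) / C) ^ ((2 : ℝ) / 3)) := by linarith [hfirst]
      nlinarith
    have hrw : ((1 / 2) * ((s : ℝ) / C) ^ ((2 : ℝ) / 3)) ^ 2
        = (1 / 4) * ((s : ℝ) / C) ^ ((4 : ℝ) / 3) := by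
      rw [mul_pow, ← Real.rpow_natCast (((s : ℝ) / C) ^ ((2 : ℝ) / 3)) 2,
        ← Real.rpow_mul (le_of_lt hsCpos)]
      norm_num
    rw [hsq]
    nlinarith [sq_nonneg w.im]
  refine ⟨key, ?_⟩
  -- tail sum
  set f : {s : ℕ // j < s} → ℝ := fun s => w.im / ‖(x (s : ℕ) : ℂ) - w‖ ^ 2 with hf
  set c : ℝ := 4 * C ^ ((4 : ℝ) / 3) * w.im / (j : ℝ) ^ ((1 : ℝ) / 6) with hc
  have hjpow : (0 : ℝ) < (j : ℝ) ^ ((1 : ℝ) / 6) := Real.rpow_pos_of_pos (by linarith) _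
  have hc0 : 0 ≤ c := by
    rw [hc]; positivity
  set g : {s : ℕ // j < s} → ℝ := fun s => c * (((s : ℕ) : ℝ) ^ ((7 : ℝ) / 6))⁻¹ with hg
  have hfg : ∀ s : {s : ℕ // j < s}, f s ≤ g s := by
    rintro ⟨s, hs⟩
    have hsj : (j : ℝ) < (s : ℝ) := by exact_mod_cast hs
    have hs0 : (0 : ℝ) < (s : ℝ) := by linarith
    obtain ⟨-, h2⟩ := key s hs
    have hq : (0 : ℝ) < (1 / 4) * ((s : ℝ) / C) ^ ((4 : ℝ) / 3) := by
      have : (0 : ℝ) < ((s : ℝ) / C) ^ ((4 : ℝ) / 3) :=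
        Real.rpow_pos_of_pos (div_pos hs0 hC0) _
      linarith
    have habs2 : (0 : ℝ) < ‖(x s : ℂ) - w‖ ^ 2 := lt_of_lt_of_le hq h2
    have step1 : f ⟨s, hs⟩ ≤ w.im / ((1 / 4) * ((s : ℝ) / C) ^ ((4 : ℝ) / 3)) :=
      div_le_div_of_nonneg_left (le_of_lt hw) hq h2
    -- rewrite the RHS
    have hsplit : ((s : ℝ) / C) ^ ((4 : ℝ) / 3)
        = (s : ℝ) ^ ((1 : ℝ) / 6) * (s : ℝ) ^ ((7 : ℝ) / 6) / C ^ ((4 : ℝ) / 3) := by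
      rw [Real.div_rpow (le_of_lt hs0) (le_of_lt hC0),
        ← Real.rpow_add hs0]
      norm_num
    have hj16 : (j : ℝ) ^ ((1 : ℝ) / 6) ≤ (s : ℝ) ^ ((1 : ℝ) / 6) :=
      Real.rpow_le_rpow (by linarith) (le_of_lt hsj) (by norm_num)
    have hs76 : (0 : ℝ) < (s : ℝ) ^ ((7 : ℝ) / 6) := Real.rpow_pos_of_pos hs0 _
    have hs16 : (0 : ℝ) < (s : ℝ) ^ ((1 : ℝ) / 6) := Real.rpow_pos_of_pos hs0 _
    have step2 : w.im / ((1 / 4) * ((s : ℝ) / C) ^ ((4 : ℝ) / 3))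
        ≤ c * (((s : ℝ)) ^ ((7 : ℝ) / 6))⁻¹ := by
      have eq1 : w.im / ((1 / 4) * ((s : ℝ) / C) ^ ((4 : ℝ) / 3))
          = 4 * C ^ ((4:ℝ)/3) * w.im * (((s:ℝ) ^ ((1:ℝ)/6) * (s:ℝ) ^ ((7:ℝ)/6))⁻¹) := by
        rw [hsplit]
        field_simp
      have ineq : (((s:ℝ) ^ ((1:ℝ)/6) * (s:ℝ) ^ ((7:ℝ)/6))⁻¹)
          ≤ (((j:ℝ) ^ ((1:ℝ)/6) * (s:ℝ) ^ ((7:ℝ)/6))⁻¹) := by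
        apply inv_anti₀ (by positivity)
        exact mul_le_mul_of_nonneg_right hj16 (le_of_lt hs76)
      have eq2 : 4 * C ^ ((4:ℝ)/3) * w.im * (((j:ℝ) ^ ((1:ℝ)/6) * (s:ℝ) ^ ((7:ℝ)/6))⁻¹)
          = c * (((s : ℝ)) ^ ((7 : ℝ) / 6))⁻¹ := by
        rw [hc, mul_inv]
        ring
      rw [eq1, ← eq2]
      exact mul_le_mul_of_nonneg_left ineq (by positivity)
    exact le_trans step1 step2
  have hfnonneg : ∀ s : {s : ℕ // j < s}, 0 ≤ f s := by
    intro s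
    exact div_nonneg (le_of_lt hw) (sq_nonneg _)
  have hgsum : Summable g := by
    have : Summable (fun s : {s : ℕ // j < s} => (((s : ℕ) : ℝ) ^ ((7 : ℝ) / 6))⁻¹) :=
      (hSsum.subtype _)
    exact this.mul_left c
  have hfsum : Summable f := Summable.of_nonneg_of_le hfnonneg hfg hgsum
  have hstep : (∑' s : {s : ℕ // j < s}, f s) ≤ ∑' s : {s : ℕ // j < s}, g s :=
    Summable.tsum_le_tsum hfg hfsum hgsum
  have hstep2 : (∑' s : {s : ℕ // j < s}, g s)
      ≤ c * S := by
    have h1 : (∑' s : {s : ℕ // j < s}, (((s : ℕ) : ℝ) ^ ((7 : ℝ) / 6))⁻¹) ≤ S := by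
      apply Summable.tsum_le_tsum_of_inj (fun s : {s : ℕ // j < s} => (s : ℕ))
        Subtype.val_injective (fun n _ => hSnonneg n) (fun s => le_refl _)
        (hSsum.subtype _) hSsum
    calc (∑' s : {s : ℕ // j < s}, g s)
        = c * ∑' s : {s : ℕ // j < s}, (((s : ℕ) : ℝ) ^ ((7 : ℝ) / 6))⁻¹ := tsum_mul_left
      _ ≤ c * S := by
          apply mul_le_mul_of_nonneg_left h1 hc0
  calc (∑' s : {s : ℕ // j < s}, f s) ≤ c * S := le_trans hstep hstep2
    _ = 4 * C ^ ((4 : ℝ) / 3) * S * w.im / (j : ℝ) ^ ((1 : ℝ) / 6) := by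
        rw [hc]; field_simp
end
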